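/- arXiv:2010.04108 — 5 statements merged into one kernel-verified Lean document; each statement's English description precedes it below -/
import Mathlib

section
/- If the ordered permutation graph G_π is bipartite, then every vertex is a type-A vertex or a type-B vertex. -/
def permGraph {n : ℕ} (π : Equiv.Perm (Fin n)) : SimpleGraph (Fin n) :=
  SimpleGraph.fromRel (fun u v => u < v ∧ π.symm v < π.symm u)

def typeA {n : ℕ} (π : Equiv.Perm (Fin n)) (v : Fin n) : Prop :=
  ∀ u, u ≤ v → π.symm u ≤ π.symm v

def typeB {n : ℕ} (π : Equiv.Perm (Fin n)) (v : Fin n) : Prop :=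
  ∀ u, v ≤ u → π.symm v ≤ π.symm u

theorem stmt_13 {n : ℕ} (π : Equiv.Perm (Fin n))
    (hbip : (permGraph π).Colorable 2) :
    ∀ v, typeA π v ∨ typeB π v := by
  intro v
  by_contra h
  rw [not_or, typeA, typeB] at h
  push_neg at h
  obtain ⟨⟨a, hav, ha⟩, ⟨b, hvb, hb⟩⟩ := h
  -- a < v : if a = v, σv < σa is impossible
  have hav' : a < v := lt_of_le_of_ne hav (by rintro rfl; exact lt_irrefl _ ha)
  have hvb' : v < b := lt_of_le_of_ne hvb (by rintro rfl; exact lt_irrefl _ hb)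
  obtain ⟨C⟩ := hbip
  have adj : ∀ x y : Fin n, x < y → π.symm y < π.symm x → (permGraph π).Adj x y := by
    intro x y h1 h2
    rw [permGraph, SimpleGraph.fromRel_adj]
    exact ⟨ne_of_lt h1, Or.inl ⟨h1, h2⟩⟩
  have e1 := C.valid (adj a v hav' ha)
  have e2 := C.valid (adj v b hvb' hb)
  have e3 := C.valid (adj a b (hav'.trans hvb') (hb.trans ha))
  have := C a
  have := C v
  have := C b
  omega
end

section
/- Let G_π = (A, B, E) be a bipartite ordered permutation graph with parts A (type-A vertices) and B (type-B vertices). Then the natural ordering 1 < 2 < … < n restricted to A and to B is a strong ordering: for all edges {a,b}, {a',b'} ∈ E with a,a' ∈ A, b,b' ∈ B, if a < a' and b > b', then {a,b'} ∈ E and {a',b} ∈ E. -/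
lemma adjAB {n : ℕ} (π : Equiv.Perm (Fin n)) {a b : Fin n}
    (ha : typeA π a) (hab : (permGraph π).Adj a b) :
    a < b ∧ π.symm b < π.symm a := by
  obtain ⟨hne, h | h⟩ := hab
  · exact h
  · exact absurd (ha b h.1.le) (not_le.mpr h.2)

theorem stmt_15 {n : ℕ} (π : Equiv.Perm (Fin n))
    (hbip : (permGraph π).Colorable 2)
    (a a' b b' : Fin n)
    (ha : typeA π a) (ha' : typeA π a') (hb : typeB π b) (hb' : typeB π b')
    (hab : (permGraph π).Adj a b) (hab' : (permGraph π).Adj a' b')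
    (haa : a < a') (hbb : b' < b) :
    (permGraph π).Adj a b' ∧ (permGraph π).Adj a' b := by
  obtain ⟨h1, h2⟩ := adjAB π ha hab
  obtain ⟨h1', h2'⟩ := adjAB π ha' hab'
  constructor
  · have hlt : a < b' := lt_trans haa h1'
    exact ⟨hlt.ne, Or.inl ⟨hlt, lt_of_le_of_lt (hb' b hbb.le) h2⟩⟩
  · have hlt : a' < b := lt_trans h1' hbb
    exact ⟨hlt.ne, Or.inl ⟨hlt, lt_of_lt_of_le h2 (ha' a haa.le)⟩⟩
end

section
/- In a bipartite ordered permutation graph G_π, for a type-B vertex v, the neighborhood of v equals the set of type-A vertices a with a⁻(v) ≤ a ≤ a⁺(v), where a⁻(v) and a⁺(v) denote the minimum and maximum type-A neighbor of v; i.e., the neighborhood of v is a contiguous interval within the type-A vertices. -/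
lemma permGraph_adj {n : ℕ} (π : Equiv.Perm (Fin n)) (u w : Fin n) :
    (permGraph π).Adj u w ↔ u ≠ w ∧
      ((u < w ∧ π.symm w < π.symm u) ∨ (w < u ∧ π.symm u < π.symm w)) := by
  simp [permGraph, SimpleGraph.fromRel_adj]

theorem stmt_16 {n : ℕ} (π : Equiv.Perm (Fin n))
    (hbip : (permGraph π).Colorable 2)
    (v : Fin n) (hv : typeB π v)
    (aminus aplus : Fin n)
    (hmin : typeA π aminus ∧ (permGraph π).Adj v aminus ∧
      ∀ a, typeA π a → (permGraph π).Adj v a → aminus ≤ a)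
    (hmax : typeA π aplus ∧ (permGraph π).Adj v aplus ∧
      ∀ a, typeA π a → (permGraph π).Adj v a → a ≤ aplus) :
    ∀ u, (permGraph π).Adj v u ↔ (typeA π u ∧ aminus ≤ u ∧ u ≤ aplus) := by
  obtain ⟨haminA, haminAdj, hminle⟩ := hmin
  obtain ⟨haplA, haplAdj, hmaxle⟩ := hmax
  -- any neighbor u of v satisfies u < v and π.symm v < π.symm u
  have key : ∀ u, (permGraph π).Adj v u → u < v ∧ π.symm v < π.symm u := by
    intro u hadj
    rw [permGraph_adj] at hadj
    obtain ⟨hne, h | h⟩ := hadj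
    · exact absurd (hv u h.1.le) (not_le.2 h.2)
    · exact h
  intro u
  constructor
  · intro hadj
    obtain ⟨huv, hπuv⟩ := key u hadj
    have huA : typeA π u := by
      by_contra hA
      simp only [typeA, not_forall] at hA
      obtain ⟨w, hwu, hπwu⟩ := hA
      have hπwu : π.symm u < π.symm w := not_le.1 hπwu
      have hwu : w < u := lt_of_le_of_ne hwu (by rintro rfl; exact lt_irrefl _ hπwu)
      -- triangle w, u, v
      have h1 : (permGraph π).Adj w u := by
        rw [permGraph_adj]; exact ⟨hwu.ne, Or.inl ⟨hwu, hπwu⟩⟩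
      have h2 : (permGraph π).Adj w v := by
        rw [permGraph_adj]
        exact ⟨(hwu.trans huv).ne, Or.inl ⟨hwu.trans huv, hπuv.trans hπwu⟩⟩
      obtain ⟨C⟩ := hbip
      have c1 := C.valid h1
      have c2 := C.valid h2
      have c3 := C.valid hadj.symm
      have l1 := (C w).is_lt
      have l2 := (C u).is_lt
      have l3 := (C v).is_lt
      have e1 : (C w).val ≠ (C u).val := fun h => c1 (Fin.ext h)
      have e2 : (C w).val ≠ (C v).val := fun h => c2 (Fin.ext h)
      have e3 : (C u).val ≠ (C v).val := fun h => c3 (Fin.ext h)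
      omega
    exact ⟨huA, hminle u huA hadj, hmaxle u huA hadj⟩
  · rintro ⟨huA, h1, h2⟩
    have hpl := key aplus haplAdj
    have hmn := key aminus haminAdj
    have huv : u < v := lt_of_le_of_lt h2 hpl.1
    have hπ : π.symm v < π.symm u := lt_of_lt_of_le hmn.2 (huA aminus h1)
    rw [permGraph_adj]
    exact ⟨huv.ne', Or.inr ⟨huv, hπ⟩⟩
end

section
/- For any vertices u < v in G_π with u and v not adjacent, if u and v are in the same connected component, then some shortest path from u to v passes through a⁺(u) or through b⁺(u); more precisely, dist(u,v) = 1 + min(dist(a⁺(u), v), dist(b⁺(u), v)), where a⁺(u) (resp. b⁺(u)) is the maximum type-A (resp. type-B) neighbor of u. -/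
lemma pg_adj {n : ℕ} (π : Equiv.Perm (Fin n)) {x y : Fin n} :
    (permGraph π).Adj x y ↔
      (x < y ∧ π.symm y < π.symm x) ∨ (y < x ∧ π.symm x < π.symm y) := by
  unfold permGraph
  rw [SimpleGraph.fromRel_adj]
  constructor
  · rintro ⟨_, h⟩; exact h
  · rintro h
    refine ⟨?_, h⟩
    rcases h with ⟨h1, _⟩ | ⟨h1, _⟩
    · exact h1.ne
    · exact h1.ne'

lemma pg_aux {n : ℕ} (π : Equiv.Perm (Fin n)) (u ap bp : Fin n)
    (hAap : (permGraph π).Adj u ap) (hAbp : (permGraph π).Adj u bp)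
    (hcov : ∀ {w x : Fin n}, (permGraph π).Adj u w → (permGraph π).Adj w x →
      u < x → π.symm u < π.symm x → (permGraph π).Adj ap x ∨ (permGraph π).Adj bp x) :
    ∀ d (v : Fin n), (permGraph π).Reachable u v → u < v → π.symm u < π.symm v →
      (permGraph π).dist u v ≤ d →
      min ((permGraph π).dist ap v) ((permGraph π).dist bp v) + 1 ≤ (permGraph π).dist u v := by
  intro d
  induction d with
  | zero =>
    intro v hr huv _ hd
    have := hr.pos_dist_of_ne (ne_of_lt huv)
    omega
  | succ d ih =>
    intro v hr huv hp hd
    have hne : u ≠ v := ne_of_lt huv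
    have hpos : 0 < (permGraph π).dist u v := hr.pos_dist_of_ne hne
    have hnadj : ¬ (permGraph π).Adj u v := by
      rw [pg_adj]
      rintro (⟨_, h2⟩ | ⟨h1, _⟩)
      · exact absurd hp (not_lt.mpr (le_of_lt h2))
      · exact absurd huv (not_lt.mpr (le_of_lt h1))
    obtain ⟨W, hW⟩ := hr.exists_walk_length_eq_dist
    obtain ⟨y, hadjvy, q, hWr⟩ := (SimpleGraph.Walk.exists_eq_cons_of_ne hne.symm) W.reverse
    have hlen : q.length + 1 = (permGraph π).dist u v := by
      have h1 : W.reverse.length = W.length := SimpleGraph.Walk.length_reverse W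
      rw [hWr] at h1
      simp only [SimpleGraph.Walk.length_cons] at h1
      omega
    have hruy : (permGraph π).Reachable u y := ⟨q.reverse⟩
    have hdy1 : (permGraph π).dist u y ≤ q.length := by
      have := SimpleGraph.dist_le q
      rwa [SimpleGraph.dist_comm] at this
    have hdy2 : (permGraph π).dist u v ≤ (permGraph π).dist u y + 1 := by
      obtain ⟨Q, hQ⟩ := hruy.exists_walk_length_eq_dist
      have := SimpleGraph.dist_le (Q.append (SimpleGraph.Walk.cons hadjvy.symm SimpleGraph.Walk.nil))
      simp only [SimpleGraph.Walk.length_append, SimpleGraph.Walk.length_cons,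
        SimpleGraph.Walk.length_nil, hQ] at this
      omega
    by_cases hyu : y = u
    · exact absurd hadjvy.symm (hyu ▸ hnadj)
    by_cases hadjuy : (permGraph π).Adj u y
    · -- dist u v = 2 case
      have hdv2 : (permGraph π).dist u v ≠ 1 := by
        intro h1
        obtain ⟨w', hadj', p', hW'⟩ := (SimpleGraph.Walk.exists_eq_cons_of_ne hne) W
        have : p'.length = 0 := by
          rw [hW'] at hW
          simp only [SimpleGraph.Walk.length_cons] at hW
          omega
        have hwv : w' = v := SimpleGraph.Walk.eq_of_length_eq_zero this
        exact hnadj (hwv ▸ hadj')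
      rcases hcov hadjuy hadjvy.symm huv hp with hc | hc
      · have : (permGraph π).dist ap v ≤ 1 := by
          simpa using SimpleGraph.dist_le (SimpleGraph.Walk.cons hc SimpleGraph.Walk.nil)
        omega
      · have : (permGraph π).dist bp v ≤ 1 := by
          simpa using SimpleGraph.dist_le (SimpleGraph.Walk.cons hc SimpleGraph.Walk.nil)
        omega
    · -- y is non-adjacent to u and ≠ u: quadrant analysis
      have hpy : π.symm y ≠ π.symm u := fun h => hyu (π.symm.injective h)
      rcases lt_trichotomy y u with hlt | heq | hgt
      · -- y < u : must have π.symm y < π.symm u (else adjacent), Q_ll, contradiction with adj v y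
        have hpylt : π.symm y < π.symm u := by
          rcases lt_or_gt_of_ne hpy with h | h
          · exact h
          · exact absurd ((pg_adj π).mpr (Or.inr ⟨hlt, h⟩)) hadjuy
        rcases (pg_adj π).mp hadjvy with ⟨h1, _⟩ | ⟨_, h2⟩
        · exact absurd (lt_trans huv h1) (not_lt.mpr (le_of_lt hlt))
        · exact absurd (lt_trans (lt_trans h2 hpylt) hp) (lt_irrefl _)
      · exact absurd heq hyu
      · -- y > u : Q_ur, apply induction
        have hpygt : π.symm u < π.symm y := by
          rcases lt_or_gt_of_ne hpy with h | h
          · exact absurd ((pg_adj π).mpr (Or.inl ⟨hgt, h⟩)) hadjuy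
          · exact h
        have hIH := ih y hruy hgt hpygt (by omega)
        have hrav : (permGraph π).Reachable ap y := (hAap.symm.reachable).trans hruy
        have hrbv : (permGraph π).Reachable bp y := (hAbp.symm.reachable).trans hruy
        obtain ⟨A, hA⟩ := hrav.exists_walk_length_eq_dist
        obtain ⟨B, hB⟩ := hrbv.exists_walk_length_eq_dist
        have h3 : (permGraph π).dist ap v ≤ (permGraph π).dist ap y + 1 := by
          have := SimpleGraph.dist_le (A.append (SimpleGraph.Walk.cons hadjvy.symm SimpleGraph.Walk.nil))
          simp only [SimpleGraph.Walk.length_append, SimpleGraph.Walk.length_cons,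
            SimpleGraph.Walk.length_nil, hA] at this
          omega
        have h4 : (permGraph π).dist bp v ≤ (permGraph π).dist bp y + 1 := by
          have := SimpleGraph.dist_le (B.append (SimpleGraph.Walk.cons hadjvy.symm SimpleGraph.Walk.nil))
          simp only [SimpleGraph.Walk.length_append, SimpleGraph.Walk.length_cons,
            SimpleGraph.Walk.length_nil, hB] at this
          omega
        omega

theorem stmt_17 {n : ℕ} (π : Equiv.Perm (Fin n)) (u v : Fin n)
    (huv : u < v) (hna : ¬ (permGraph π).Adj u v)
    (hr : (permGraph π).Reachable u v)
    (ap bp : Fin n)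
    (hap : typeA π ap ∧ (permGraph π).Adj u ap ∧
      ∀ a, typeA π a → (permGraph π).Adj u a → a ≤ ap)
    (hbp : typeB π bp ∧ (permGraph π).Adj u bp ∧
      ∀ b, typeB π b → (permGraph π).Adj u b → b ≤ bp) :
    (permGraph π).dist u v =
      1 + min ((permGraph π).dist ap v) ((permGraph π).dist bp v) := by
  obtain ⟨hapA, hapAdj, hapMax⟩ := hap
  obtain ⟨hbpB, hbpAdj, hbpMax⟩ := hbp
  -- F1 : ap < u and π.symm u < π.symm ap
  have F1 : ap < u ∧ π.symm u < π.symm ap := by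
    rcases (pg_adj π).mp hapAdj with ⟨h1, h2⟩ | ⟨h1, h2⟩
    · exact absurd (hapA u (le_of_lt h1)) (not_le.mpr h2)
    · exact ⟨h1, h2⟩
  -- F2 : u < bp and π.symm bp < π.symm u
  have F2 : u < bp ∧ π.symm bp < π.symm u := by
    rcases (pg_adj π).mp hbpAdj with ⟨h1, h2⟩ | ⟨h1, h2⟩
    · exact ⟨h1, h2⟩
    · exact absurd (hbpB u (le_of_lt h1)) (not_le.mpr h2)
  -- P_A : every value ≤ u has position ≤ position of ap
  have PA : ∀ t, t ≤ u → π.symm t ≤ π.symm ap := by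
    obtain ⟨a, ha, hamax⟩ := Finset.exists_max_image (Finset.univ.filter (· ≤ u))
      (fun t => π.symm t) ⟨u, by simp⟩
    simp only [Finset.mem_filter, Finset.mem_univ, true_and] at ha hamax
    have hmax' : ∀ t, t ≤ u → π.symm t ≤ π.symm a := fun t ht => hamax t ht
    have hA : typeA π a := fun t ht => hmax' t (le_trans ht ha)
    have hgt : π.symm u < π.symm a := lt_of_lt_of_le F1.2 (hmax' ap (le_of_lt F1.1))
    have hau : a < u := by
      rcases lt_or_eq_of_le ha with h | h
      · exact h
      · exact absurd (h ▸ hgt) (lt_irrefl _)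
    have hadj : (permGraph π).Adj u a := (pg_adj π).mpr (Or.inr ⟨hau, hgt⟩)
    have hle : a ≤ ap := hapMax a hA hadj
    exact fun t ht => le_trans (hmax' t ht) (hapA a hle)
  -- Q_B : every t > u with position < position of u satisfies t ≤ bp
  have QB : ∀ t, u < t → π.symm t < π.symm u → t ≤ bp := by
    intro t ht hpt
    obtain ⟨c, hc, hcmin⟩ := Finset.exists_min_image (Finset.univ.filter (t ≤ ·))
      (fun s => π.symm s) ⟨t, by simp⟩
    simp only [Finset.mem_filter, Finset.mem_univ, true_and] at hc hcmin
    have hmin' : ∀ s, t ≤ s → π.symm c ≤ π.symm s := fun s hs => hcmin s hs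
    have hB : typeB π c := fun s hs => hmin' s (le_trans hc hs)
    have hcu : u < c := lt_of_lt_of_le ht hc
    have hpc : π.symm c < π.symm u := lt_of_le_of_lt (hmin' t le_rfl) hpt
    have hadj : (permGraph π).Adj u c := (pg_adj π).mpr (Or.inl ⟨hcu, hpc⟩)
    exact le_trans hc (hbpMax c hB hadj)
  -- covering lemma
  have hcov : ∀ {w x : Fin n}, (permGraph π).Adj u w → (permGraph π).Adj w x →
      u < x → π.symm u < π.symm x → (permGraph π).Adj ap x ∨ (permGraph π).Adj bp x := by
    intro w x huw hwx hux hpux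
    rcases (pg_adj π).mp huw with ⟨h1, h2⟩ | ⟨h1, h2⟩
    · -- u < w, pos w < pos u
      rcases (pg_adj π).mp hwx with ⟨h3, h4⟩ | ⟨h3, h4⟩
      · exact absurd (lt_trans (lt_trans h4 h2) hpux) (lt_irrefl _)
      · right
        refine (pg_adj π).mpr (Or.inr ⟨lt_of_lt_of_le h3 (QB w h1 h2), ?_⟩)
        exact lt_trans F2.2 hpux
    · -- w < u, pos u < pos w
      rcases (pg_adj π).mp hwx with ⟨h3, h4⟩ | ⟨h3, h4⟩
      · left
        refine (pg_adj π).mpr (Or.inl ⟨lt_trans F1.1 hux, ?_⟩)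
        exact lt_of_lt_of_le h4 (PA w (le_of_lt h1))
      · exact absurd (lt_trans (lt_trans h3 h1) hux) (lt_irrefl _)
  -- position comparison for u, v
  have hpuv : π.symm u < π.symm v := by
    rcases lt_or_gt_of_ne (fun h => (ne_of_lt huv) (π.symm.injective h) : π.symm u ≠ π.symm v) with h | h
    · exact h
    · exact absurd ((pg_adj π).mpr (Or.inl ⟨huv, h⟩)) hna
  have hmain := pg_aux π u ap bp hapAdj hbpAdj hcov ((permGraph π).dist u v) v hr huv hpuv le_rfl
  -- upper bounds
  have hrav : (permGraph π).Reachable ap v := (hapAdj.symm.reachable).trans hr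
  have hrbv : (permGraph π).Reachable bp v := (hbpAdj.symm.reachable).trans hr
  obtain ⟨A, hA⟩ := hrav.exists_walk_length_eq_dist
  obtain ⟨B, hB⟩ := hrbv.exists_walk_length_eq_dist
  have hub1 : (permGraph π).dist u v ≤ (permGraph π).dist ap v + 1 := by
    have := SimpleGraph.dist_le (SimpleGraph.Walk.cons hapAdj A)
    simp only [SimpleGraph.Walk.length_cons, hA] at this
    omega
  have hub2 : (permGraph π).dist u v ≤ (permGraph π).dist bp v + 1 := by
    have := SimpleGraph.dist_le (SimpleGraph.Walk.cons hbpAdj B)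
    simp only [SimpleGraph.Walk.length_cons, hB] at this
    omega
  omega
end

section
/- Every caterpillar tree is a permutation graph, i.e., for every caterpillar T on n vertices there exists a permutation π of [n] and a graph isomorphism from T to G_π. -/
def IsCaterpillar {V : Type*} [Fintype V] (T : SimpleGraph V) [DecidableRel T.Adj] : Prop :=
  T.IsTree ∧
  ∃ (k : ℕ) (f : Fin k ≃ {v : V // 2 ≤ T.degree v}),
    ∀ i j : Fin k,
      (T.induce {v : V | 2 ≤ T.degree v}).Adj
          ⟨(f i).1, (f i).2⟩ ⟨(f j).1, (f j).2⟩ ↔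
        (i.val + 1 = j.val ∨ j.val + 1 = i.val)


lemma baseLt {M c1 r1 c2 r2 : ℕ} (h1 : r1 < M) (h2 : r2 < M) :
    M * c1 + r1 < M * c2 + r2 ↔ c1 < c2 ∨ (c1 = c2 ∧ r1 < r2) := by
  constructor
  · intro h
    rcases lt_trichotomy c1 c2 with hc|hc|hc
    · exact Or.inl hc
    · exact Or.inr ⟨hc, by subst hc; omega⟩
    · exfalso
      have h3 : M * (c2 + 1) ≤ M * c1 := Nat.mul_le_mul_left M hc
      rw [Nat.mul_add, Nat.mul_one] at h3; omega
  · rintro (hc | ⟨rfl, hr⟩)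
    · have h3 : M * (c1 + 1) ≤ M * c2 := Nat.mul_le_mul_left M hc
      rw [Nat.mul_add, Nat.mul_one] at h3; omega
    · omega

lemma baseEq {M c1 r1 c2 r2 : ℕ} (h1 : r1 < M) (h2 : r2 < M) :
    M * c1 + r1 = M * c2 + r2 ↔ c1 = c2 ∧ r1 = r2 := by
  constructor
  · intro h
    have h3 : ¬ (c1 < c2 ∨ (c1 = c2 ∧ r1 < r2)) := by rw [← baseLt h1 h2]; omega
    have h4 : ¬ (c2 < c1 ∨ (c2 = c1 ∧ r2 < r1)) := by rw [← baseLt h2 h1]; omega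
    omega
  · rintro ⟨rfl, rfl⟩; rfl

lemma exists_adj_of_connected {V : Type*} [Fintype V] (T : SimpleGraph V)
    (conn : T.Connected) (hn : 2 ≤ Fintype.card V) (v : V) : ∃ w, T.Adj v w := by
  obtain ⟨w, hw⟩ := Fintype.exists_ne_of_one_lt_card (by omega) v
  obtain ⟨p⟩ := conn.preconnected v w
  cases p with
  | nil => exact absurd rfl hw
  | cons h q => exact ⟨_, h⟩

lemma core {V : Type*} [Fintype V] [DecidableEq V]
    (T : SimpleGraph V) [DecidableRel T.Adj] (htree : T.IsTree)
    (k : ℕ) (f : Fin k ≃ {v : V // 2 ≤ T.degree v})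
    (hf : ∀ i j : Fin k,
      (T.induce {v : V | 2 ≤ T.degree v}).Adj
          ⟨(f i).1, (f i).2⟩ ⟨(f j).1, (f j).2⟩ ↔
        (i.val + 1 = j.val ∨ j.val + 1 = i.val))
    (hn : 3 ≤ Fintype.card V) :
    ∃ gt gb : V → ℕ, Function.Injective gt ∧ Function.Injective gb ∧
      ∀ u v, T.Adj u v ↔ u ≠ v ∧
        ((gt u < gt v ∧ gb v < gb u) ∨ (gt v < gt u ∧ gb u < gb v)) := by
  classical
  have conn := htree.isConnected
  have hadj : ∀ v : V, ∃ w, T.Adj v w :=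
    exists_adj_of_connected T conn (by omega)
  set nbr : V → V := fun v => (hadj v).choose with hnbr_def
  have hnbr : ∀ v, T.Adj v (nbr v) := fun v => (hadj v).choose_spec
  have hdeg1 : ∀ v, ¬ 2 ≤ T.degree v → T.degree v = 1 := by
    intro v h
    have : 0 < T.degree v := (T.degree_pos_iff_exists_adj v).2 (hadj v)
    omega
  have huniq : ∀ v w, T.degree v = 1 → T.Adj v w → w = nbr v := by
    intro v w h hw
    have hcard : (T.neighborFinset v).card = 1 := h
    obtain ⟨a, ha⟩ := Finset.card_eq_one.mp hcard
    have h1 : w ∈ T.neighborFinset v := (T.mem_neighborFinset v w).2 hw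
    have h2 : nbr v ∈ T.neighborFinset v := (T.mem_neighborFinset v _).2 (hnbr v)
    rw [ha, Finset.mem_singleton] at h1 h2
    rw [h1, h2]
  have hnoleafpair : ∀ v w, T.degree v = 1 → T.degree w = 1 → ¬ T.Adj v w := by
    intro v w hv hw hvw
    have key : ∀ (y z : V) (p : T.Walk y z), (y = v ∨ y = w) → (z = v ∨ z = w) := by
      intro y z p
      induction p with
      | nil => exact id
      | cons h q ih =>
        intro hy
        apply ih
        rcases hy with hy | hy
        · rw [hy] at h
          have h1 := huniq _ _ hv h
          have h2 : w = nbr v := huniq _ _ hv hvw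
          exact Or.inr (h1.trans h2.symm)
        · rw [hy] at h
          have h1 := huniq _ _ hw h
          have h2 : v = nbr w := huniq _ _ hw hvw.symm
          exact Or.inl (h1.trans h2.symm)
    have hall : ∀ x : V, x = v ∨ x = w := by
      intro x
      obtain ⟨p⟩ := conn.preconnected v x
      exact key _ _ p (Or.inl rfl)
    have hsub : (Finset.univ : Finset V) ⊆ {v, w} := fun x _ => by
      rcases hall x with rfl | rfl <;> simp
    have h2 : Fintype.card V ≤ ({v, w} : Finset V).card := by
      rw [← Finset.card_univ]; exact Finset.card_le_card hsub
    have h3 : ({v, w} : Finset V).card ≤ 2 :=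
      le_trans (Finset.card_insert_le _ _) (by simp)
    omega
  have hnbrspine : ∀ v, T.degree v = 1 → 2 ≤ T.degree (nbr v) := by
    intro v hv
    by_contra h
    exact hnoleafpair v (nbr v) hv (hdeg1 _ h) (hnbr v)
  set idx : ∀ v : V, 2 ≤ T.degree v → ℕ := fun v h => (f.symm ⟨v, h⟩ : Fin k).val
    with hidx_def
  have hidxinj : ∀ u v (hu : 2 ≤ T.degree u) (hv : 2 ≤ T.degree v),
      idx u hu = idx v hv ↔ u = v := by
    intro u v hu hv
    constructor
    · intro h
      have h1 : f.symm ⟨u, hu⟩ = f.symm ⟨v, hv⟩ := Fin.ext h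
      have h2 := f.symm.injective h1
      exact congrArg Subtype.val h2
    · rintro rfl; rfl
  have hspine : ∀ (u v : V) (hu : 2 ≤ T.degree u) (hv : 2 ≤ T.degree v),
      T.Adj u v ↔ (idx u hu + 1 = idx v hv ∨ idx v hv + 1 = idx u hu) := by
    intro u v hu hv
    have key := hf (f.symm ⟨u, hu⟩) (f.symm ⟨v, hv⟩)
    simp only [Equiv.apply_symm_apply] at key
    rw [← key]
    simp [SimpleGraph.comap_adj]
  set M : ℕ := Fintype.card V + 1 with hM_def
  set e0 := Fintype.equivFin V with he0_def
  set rk : V → ℕ := fun v => (e0 v).val + 1 with hrk_def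
  have hrkM : ∀ v, rk v < M := by
    intro v
    have := (e0 v).isLt
    simp only [hrk_def, hM_def]
    omega
  have hrk1 : ∀ v, 1 ≤ rk v := fun v => by simp [hrk_def]
  have hrkinj : ∀ u v, rk u = rk v → u = v := by
    intro u v h
    simp only [hrk_def] at h
    exact e0.injective (Fin.ext (by omega))
  have h0M : (0 : ℕ) < M := by omega
  set gt : V → ℕ := fun v =>
    if h : 2 ≤ T.degree v then
      M * (2 * idx v h + 3 * (idx v h % 2)) + 0
    else
      M * (2 * idx (nbr v) (hnbrspine v (hdeg1 v h)) + 1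
        - idx (nbr v) (hnbrspine v (hdeg1 v h)) % 2) + rk v
    with hgt_def
  set gb : V → ℕ := fun v =>
    if h : 2 ≤ T.degree v then
      M * (2 * idx v h + 3 * (1 - idx v h % 2)) + 0
    else
      M * (2 * idx (nbr v) (hnbrspine v (hdeg1 v h))
        + idx (nbr v) (hnbrspine v (hdeg1 v h)) % 2) + rk v
    with hgb_def
  have hgtS : ∀ (v) (hv : 2 ≤ T.degree v),
      gt v = M * (2 * idx v hv + 3 * (idx v hv % 2)) + 0 := by
    intro v hv; simp only [hgt_def]; rw [dif_pos hv]
  have hgbS : ∀ (v) (hv : 2 ≤ T.degree v),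
      gb v = M * (2 * idx v hv + 3 * (1 - idx v hv % 2)) + 0 := by
    intro v hv; simp only [hgb_def]; rw [dif_pos hv]
  have hgtL : ∀ (v) (hv : ¬ 2 ≤ T.degree v),
      gt v = M * (2 * idx (nbr v) (hnbrspine v (hdeg1 v hv)) + 1
        - idx (nbr v) (hnbrspine v (hdeg1 v hv)) % 2) + rk v := by
    intro v hv; simp only [hgt_def]; rw [dif_neg hv]
  have hgbL : ∀ (v) (hv : ¬ 2 ≤ T.degree v),
      gb v = M * (2 * idx (nbr v) (hnbrspine v (hdeg1 v hv))
        + idx (nbr v) (hnbrspine v (hdeg1 v hv)) % 2) + rk v := by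
    intro v hv; simp only [hgb_def]; rw [dif_neg hv]
  refine ⟨gt, gb, ?_, ?_, ?_⟩
  · intro u v h
    by_cases hu : 2 ≤ T.degree u <;> by_cases hv : 2 ≤ T.degree v
    · rw [hgtS u hu, hgtS v hv] at h
      obtain ⟨hc, -⟩ := (baseEq h0M h0M).mp h
      exact (hidxinj u v hu hv).mp (by omega)
    · rw [hgtS u hu, hgtL v hv] at h
      obtain ⟨-, hr⟩ := (baseEq h0M (hrkM v)).mp h
      have := hrk1 v; omega
    · rw [hgtL u hu, hgtS v hv] at h
      obtain ⟨-, hr⟩ := (baseEq (hrkM u) h0M).mp h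
      have := hrk1 u; omega
    · rw [hgtL u hu, hgtL v hv] at h
      obtain ⟨-, hr⟩ := (baseEq (hrkM u) (hrkM v)).mp h
      exact hrkinj u v hr
  · intro u v h
    by_cases hu : 2 ≤ T.degree u <;> by_cases hv : 2 ≤ T.degree v
    · rw [hgbS u hu, hgbS v hv] at h
      obtain ⟨hc, -⟩ := (baseEq h0M h0M).mp h
      exact (hidxinj u v hu hv).mp (by omega)
    · rw [hgbS u hu, hgbL v hv] at h
      obtain ⟨-, hr⟩ := (baseEq h0M (hrkM v)).mp h
      have := hrk1 v; omega
    · rw [hgbL u hu, hgbS v hv] at h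
      obtain ⟨-, hr⟩ := (baseEq (hrkM u) h0M).mp h
      have := hrk1 u; omega
    · rw [hgbL u hu, hgbL v hv] at h
      obtain ⟨-, hr⟩ := (baseEq (hrkM u) (hrkM v)).mp h
      exact hrkinj u v hr
  · have hSL : ∀ (u v : V) (hu : 2 ≤ T.degree u) (hv : ¬ 2 ≤ T.degree v),
        (T.Adj u v ↔ u ≠ v ∧
          ((gt u < gt v ∧ gb v < gb u) ∨ (gt v < gt u ∧ gb u < gb v))) := by
      intro u v hu hv
      have hdv : T.degree v = 1 := hdeg1 v hv
      have hw : 2 ≤ T.degree (nbr v) := hnbrspine v hdv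
      have hne : u ≠ v := fun h => hv (h ▸ hu)
      have hLHS : T.Adj u v ↔ u = nbr v := by
        constructor
        · intro h; exact huniq v u hdv h.symm
        · rintro rfl; exact (hnbr v).symm
      rw [hLHS, and_iff_right hne, ← hidxinj u (nbr v) hu hw,
        hgtS u hu, hgtL v hv, hgbS u hu, hgbL v hv,
        baseLt h0M (hrkM v), baseLt (hrkM v) h0M,
        baseLt (hrkM v) h0M, baseLt h0M (hrkM v)]
      have h1 := hrk1 v
      have h2 := hrkM v
      omega
    intro u v
    by_cases hu : 2 ≤ T.degree u <;> by_cases hv : 2 ≤ T.degree v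
    · rw [hspine u v hu hv, ne_eq, ← hidxinj u v hu hv,
        hgtS u hu, hgtS v hv, hgbS u hu, hgbS v hv,
        baseLt h0M h0M, baseLt h0M h0M, baseLt h0M h0M, baseLt h0M h0M]
      omega
    · exact hSL u v hu hv
    · rw [SimpleGraph.adj_comm, hSL v u hv hu]
      constructor <;> rintro ⟨h1, h2⟩ <;> exact ⟨Ne.symm h1, Or.symm h2⟩
    · have hdu := hdeg1 u hu
      have hdv := hdeg1 v hv
      have hLHS : ¬ T.Adj u v := hnoleafpair u v hdu hdv
      constructor
      · intro h; exact absurd h hLHS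
      · rintro ⟨hne, hcross⟩
        exfalso
        rw [hgtL u hu, hgtL v hv, hgbL u hu, hgbL v hv,
          baseLt (hrkM u) (hrkM v), baseLt (hrkM v) (hrkM u),
          baseLt (hrkM v) (hrkM u), baseLt (hrkM u) (hrkM v)] at hcross
        have h1 := hrk1 u
        have h2 := hrk1 v
        omega

lemma exists_orderEquiv {V : Type*} [Fintype V] [DecidableEq V] (g : V → ℕ)
    (hg : Function.Injective g) :
    ∃ φ : V ≃ Fin (Fintype.card V), ∀ u v : V, (φ u < φ v ↔ g u < g v) := by
  classical
  set s : Finset ℕ := Finset.univ.image g with hs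
  have hcard : s.card = Fintype.card V := by
    rw [hs, Finset.card_image_of_injective _ hg, Finset.card_univ]
  let e : V → s := fun v => ⟨g v, by simp [hs]⟩
  have he : Function.Bijective e := by
    rw [Fintype.bijective_iff_injective_and_card]
    refine ⟨fun u v huv => hg (congrArg Subtype.val huv), by simp [Fintype.card_coe, hcard]⟩
  let ψ := s.orderIsoOfFin hcard
  refine ⟨(Equiv.ofBijective e he).trans ψ.symm.toEquiv, fun u v => ?_⟩
  show ψ.symm (e u) < ψ.symm (e v) ↔ _
  rw [ψ.symm.lt_iff_lt]
  exact Iff.rfl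

lemma adj_two {V : Type*} [Fintype V] [DecidableEq V] (T : SimpleGraph V)
    (conn : T.Connected) (hc : Fintype.card V = 2) {u v : V} (huv : u ≠ v) :
    T.Adj u v := by
  obtain ⟨p⟩ := conn.preconnected u v
  cases p with
  | nil => exact absurd rfl huv
  | @cons _ x _ h q =>
    have hall : ∀ y : V, y = u ∨ y = v := by
      intro y
      by_contra hy
      push_neg at hy
      have h3 : ({y, u, v} : Finset V).card = 3 := by
        rw [Finset.card_insert_of_notMem (by simp [hy.1, hy.2]),
          Finset.card_insert_of_notMem (by simp [huv]), Finset.card_singleton]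
      have := Finset.card_le_univ ({y, u, v} : Finset V)
      omega
    rcases hall x with rfl | rfl
    · exact absurd h T.irrefl
    · exact h


lemma build {V : Type*} [Fintype V] [DecidableEq V]
    (T : SimpleGraph V) [DecidableRel T.Adj]
    (gt gb : V → ℕ) (hgt : Function.Injective gt) (hgb : Function.Injective gb)
    (h : ∀ u v, T.Adj u v ↔ u ≠ v ∧
        ((gt u < gt v ∧ gb v < gb u) ∨ (gt v < gt u ∧ gb u < gb v))) :
    ∃ (π : Equiv.Perm (Fin (Fintype.card V))) (φ : V ≃ Fin (Fintype.card V)),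
      ∀ u v : V, T.Adj u v ↔ (permGraph π).Adj (φ u) (φ v) := by
  obtain ⟨φ, hφ⟩ := exists_orderEquiv gt hgt
  obtain ⟨σ, hσ⟩ := exists_orderEquiv gb hgb
  refine ⟨σ.symm.trans φ, φ, fun u v => ?_⟩
  have hsymm : ∀ w : V, (σ.symm.trans φ).symm (φ w) = σ w := by
    intro w; simp [Equiv.symm_trans_apply]
  rw [h u v]
  simp only [permGraph, SimpleGraph.fromRel_adj, hsymm, hφ, hσ, ne_eq,
    EmbeddingLike.apply_eq_iff_eq]

theorem stmt_18 {V : Type*} [Fintype V] [DecidableEq V]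
    (T : SimpleGraph V) [DecidableRel T.Adj] (hT : IsCaterpillar T) :
    ∃ (π : Equiv.Perm (Fin (Fintype.card V))) (φ : V ≃ Fin (Fintype.card V)),
      ∀ u v : V, T.Adj u v ↔ (permGraph π).Adj (φ u) (φ v) := by
  classical
  obtain ⟨htree, k, f, hf⟩ := hT
  by_cases hn : 3 ≤ Fintype.card V
  · obtain ⟨gt, gb, h1, h2, h3⟩ := core T htree k f hf hn
    exact build T gt gb h1 h2 h3
  by_cases hc2 : Fintype.card V = 2
  · set e0 := Fintype.equivFin V with he0
    have hval : ∀ w : V, (e0 w).val < 2 := fun w => hc2 ▸ (e0 w).isLt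
    have heq : ∀ u v : V, u = v ↔ (e0 u).val = (e0 v).val :=
      fun u v => ⟨fun h => by rw [h], fun h => e0.injective (Fin.ext h)⟩
    refine build T (fun v => (e0 v).val) (fun v => 1 - (e0 v).val) ?_ ?_ ?_
    · intro u v h; exact e0.injective (Fin.ext h)
    · intro u v h
      have h' : 1 - (e0 u).val = 1 - (e0 v).val := h
      have h1 := hval u; have h2 := hval v
      exact e0.injective (Fin.ext (by omega))
    · intro u v
      have hiff : T.Adj u v ↔ u ≠ v :=
        ⟨T.ne_of_adj, adj_two T htree.isConnected hc2⟩
      rw [hiff]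
      simp only [ne_eq, heq u v]
      have h1 := hval u; have h2 := hval v
      omega
  · have hle : Fintype.card V ≤ 1 := by omega
    have hsub : Subsingleton V := Fintype.card_le_one_iff_subsingleton.mp hle
    refine build T (fun _ => 0) (fun _ => 0) ?_ ?_ ?_
    · intro u v _; exact Subsingleton.elim u v
    · intro u v _; exact Subsingleton.elim u v
    · intro u v
      have huv : u = v := Subsingleton.elim u v
      subst huv
      simp
end
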